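/- For every R > 0 and t > 0, the survival probability of the center-started kernel admits the explicit series S(t) := ∫_{−R}^{R} f₁(x, t; 0) dx = (4/π) · Σ_{j=0}^∞ ((−1)^j/(2j+1)) · exp(−(2j+1)²π² t/(8R²)); in particular the spatial integral of the series may be computed term by term. -/

import Mathlib

open Real Filter Topology MeasureTheory

/-- Dirichlet heat kernel of the interval `(-R, R)` with source `x'`. -/
noncomputable def f₁ (R x' x t : ℝ) : ℝ :=
  ∑' k : ℕ, (1 / R) * Real.sin (((k : ℝ) + 1) * π * (x' + R) / (2 * R)) *
    Real.sin (((k : ℝ) + 1) * π * (x + R) / (2 * R)) *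
    Real.exp (-((((k : ℝ) + 1) * π) ^ 2 / (4 * R ^ 2)) * t / 2)

/-- The survival probability of the center-started kernel admits the explicit series
`∫_{-R}..R} f₁(x, t; 0) dx = (4/π) ∑_{j≥0} ((-1)^j/(2j+1)) exp(-(2j+1)²π²t/(8R²))`. -/
theorem survival_probability_series (R : ℝ) (hR : 0 < R) (t : ℝ) (ht : 0 < t) :
    ∫ x in (-R)..R, f₁ R 0 x t =
      (4 / π) * ∑' j : ℕ, ((-1 : ℝ) ^ j / (2 * (j : ℝ) + 1)) *
        Real.exp (-((2 * (j : ℝ) + 1) ^ 2 * π ^ 2 * t) / (8 * R ^ 2)) := by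
  have hπ : (0:ℝ) < π := Real.pi_pos
  have hR0 : (R:ℝ) ≠ 0 := hR.ne'
  set g : ℕ → ℝ → ℝ := fun k x =>
    (1 / R) * Real.sin (((k : ℝ) + 1) * π * (0 + R) / (2 * R)) *
      Real.sin (((k : ℝ) + 1) * π * (x + R) / (2 * R)) *
      Real.exp (-((((k : ℝ) + 1) * π) ^ 2 / (4 * R ^ 2)) * t / 2) with hg
  set E : ℕ → ℝ := fun k => -((((k : ℝ) + 1) * π) ^ 2 / (4 * R ^ 2)) * t / 2 with hE
  set c : ℝ := π ^ 2 * t / (8 * R ^ 2) with hc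
  have hcpos : 0 < c := by positivity
  -- summability of the exponential factors
  have hsumexp : Summable fun k : ℕ => Real.exp (E k) := by
    refine Summable.of_nonneg_of_le (fun k => (Real.exp_pos _).le) (fun k => ?_)
      (summable_geometric_of_lt_one (Real.exp_pos (-c)).le
        (Real.exp_lt_one_iff.2 (by linarith)))
    rw [← Real.exp_nat_mul]
    apply Real.exp_le_exp.2
    have hk : (0:ℝ) ≤ (k:ℝ) := Nat.cast_nonneg k
    have hEk : E k = -(((k:ℝ)+1)^2 * c) := by
      simp only [hE, hc]; field_simp; ring
    rw [hEk]
    nlinarith [hcpos, sq_nonneg ((k:ℝ))]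
  -- a uniform bound
  set B : ℕ → ℝ := fun k => (1 / R) * Real.exp (E k) with hB
  have hBpos : ∀ k, 0 < B k := fun k => by positivity
  have hbound : ∀ k x, ‖g k x‖ ≤ B k := by
    intro k x
    simp only [hg, hB, Real.norm_eq_abs, abs_mul]
    have h1 : |Real.sin (((k : ℝ) + 1) * π * (0 + R) / (2 * R))| ≤ 1 := Real.abs_sin_le_one _
    have h2 : |Real.sin (((k : ℝ) + 1) * π * (x + R) / (2 * R))| ≤ 1 := Real.abs_sin_le_one _
    have h3 : |Real.exp (E k)| = Real.exp (E k) := abs_of_pos (Real.exp_pos _)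
    have h4 : |(1:ℝ)/R| = 1/R := abs_of_pos (by positivity)
    rw [h3, h4]
    have hprod : |Real.sin (((k : ℝ) + 1) * π * (0 + R) / (2 * R))| *
        |Real.sin (((k : ℝ) + 1) * π * (x + R) / (2 * R))| ≤ 1 :=
      mul_le_one₀ h1 (abs_nonneg _) h2
    have hpos : (0:ℝ) < 1/R * Real.exp (E k) := by positivity
    nlinarith [hprod, hpos, abs_nonneg (Real.sin (((k : ℝ) + 1) * π * (0 + R) / (2 * R))),
      abs_nonneg (Real.sin (((k : ℝ) + 1) * π * (x + R) / (2 * R)))]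
  have hsumB : Summable B := hsumexp.mul_left _
  -- continuity/measurability of each term
  have hcont : ∀ k, Continuous (g k) := by
    intro k
    simp only [hg]
    fun_prop
  -- interchange sum and integral
  have hRR : -R ≤ R := by linarith
  have hswap : ∫ x in (-R)..R, f₁ R 0 x t = ∑' k, ∫ x in (-R)..R, g k x := by
    have h1 : ∀ x, f₁ R 0 x t = ∑' k, g k x := fun x => rfl
    simp_rw [h1]
    rw [intervalIntegral.integral_of_le hRR]
    have := MeasureTheory.integral_tsum (μ := volume.restrict (Set.Ioc (-R) R)) (f := g)
      (fun k => (hcont k).aestronglyMeasurable) ?_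
    · rw [this]
      congr 1
      funext k
      rw [intervalIntegral.integral_of_le hRR]
    · -- finiteness of the sum of lintegrals
      have hle : ∀ k, ∫⁻ x, ‖g k x‖₊ ∂(volume.restrict (Set.Ioc (-R) R))
          ≤ ENNReal.ofReal (B k * (2 * R)) := by
        intro k
        calc ∫⁻ x, ‖g k x‖₊ ∂(volume.restrict (Set.Ioc (-R) R))
            ≤ ∫⁻ _, ENNReal.ofReal (B k) ∂(volume.restrict (Set.Ioc (-R) R)) := by
              apply lintegral_mono
              intro x
              calc (‖g k x‖₊ : ENNReal) = ENNReal.ofReal ‖g k x‖ :=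
                    (ofReal_norm_eq_enorm _).symm
                _ ≤ ENNReal.ofReal (B k) := ENNReal.ofReal_le_ofReal (hbound k x)
          _ = ENNReal.ofReal (B k) * volume (Set.Ioc (-R) R) := by
              rw [MeasureTheory.lintegral_const, Measure.restrict_apply MeasurableSet.univ,
                Set.univ_inter]
          _ = ENNReal.ofReal (B k * (2 * R)) := by
              rw [Real.volume_Ioc, ENNReal.ofReal_mul (hBpos k).le]
              congr 1
              rw [sub_neg_eq_add]; ring_nf
        
      refine ne_top_of_le_ne_top ?_ (ENNReal.tsum_le_tsum hle)
      rw [← ENNReal.ofReal_tsum_of_nonneg (fun k => by positivity) (hsumB.mul_right _)]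
      exact ENNReal.ofReal_ne_top
  rw [hswap]
  -- compute each integral
  have hI : ∀ k : ℕ, ∫ x in (-R)..R, g k x =
      Real.sin (((k:ℝ)+1)*π/2) * (1 - Real.cos (((k:ℝ)+1)*π)) * (2/(((k:ℝ)+1)*π)) *
        Real.exp (E k) := by
    intro k
    have hk1 : (0:ℝ) < (k:ℝ) + 1 := by positivity
    have hc' : (((k:ℝ)+1)*π/(2*R)) ≠ 0 := by positivity
    have h1 : ∀ x : ℝ, g k x
        = ((1 / R) * Real.sin (((k:ℝ)+1)*π/2) * Real.exp (E k)) *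
          Real.sin ((((k:ℝ)+1)*π/(2*R)) * x + ((k:ℝ)+1)*π/2) := by
      intro x
      have ha : ((k:ℝ)+1)*π*(0+R)/(2*R) = ((k:ℝ)+1)*π/2 := by field_simp; ring
      have hb : ((k:ℝ)+1)*π*(x+R)/(2*R) = (((k:ℝ)+1)*π/(2*R)) * x + ((k:ℝ)+1)*π/2 := by
        field_simp
      simp only [hg, ha, hb]
      ring
    simp_rw [h1]
    rw [intervalIntegral.integral_const_mul,
      intervalIntegral.integral_comp_mul_add _ hc' (((k:ℝ)+1)*π/2)]
    have e1 : (((k:ℝ)+1)*π/(2*R)) * (-R) + ((k:ℝ)+1)*π/2 = 0 := by field_simp; ring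
    have e2 : (((k:ℝ)+1)*π/(2*R)) * R + ((k:ℝ)+1)*π/2 = ((k:ℝ)+1)*π := by field_simp; ring
    rw [e1, e2, integral_sin, Real.cos_zero, smul_eq_mul]
    field_simp
  simp_rw [hI]
  -- summability of the term sequence
  set I : ℕ → ℝ := fun k => Real.sin (((k:ℝ)+1)*π/2) * (1 - Real.cos (((k:ℝ)+1)*π)) *
      (2/(((k:ℝ)+1)*π)) * Real.exp (E k) with hIdef
  have hsumI : Summable I := by
    apply Summable.of_norm_bounded (g := fun k => (2/π) * 2 * Real.exp (E k))
      (hsumexp.mul_left _)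
    intro k
    have hk1 : (0:ℝ) < (k:ℝ) + 1 := by positivity
    have h1 : |Real.sin (((k:ℝ)+1)*π/2)| ≤ 1 := Real.abs_sin_le_one _
    have h2 : |1 - Real.cos (((k:ℝ)+1)*π)| ≤ 2 := by
      have := Real.neg_one_le_cos (((k:ℝ)+1)*π)
      have := Real.cos_le_one (((k:ℝ)+1)*π)
      rw [abs_le]; constructor <;> linarith
    have h3 : |2/(((k:ℝ)+1)*π)| ≤ 2/π := by
      rw [abs_of_pos (by positivity)]
      apply div_le_div_of_nonneg_left (by norm_num) hπ
      nlinarith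
    simp only [hIdef, Real.norm_eq_abs, abs_mul, abs_of_pos (Real.exp_pos (E k))]
    calc |Real.sin (((k:ℝ)+1)*π/2)| * |1 - Real.cos (((k:ℝ)+1)*π)| * |2/(((k:ℝ)+1)*π)| *
          Real.exp (E k)
        ≤ 1 * 2 * (2/π) * Real.exp (E k) := by
          apply mul_le_mul_of_nonneg_right _ (Real.exp_pos _).le
          have hp1 : (0:ℝ) ≤ |Real.sin (((k:ℝ)+1)*π/2)| := abs_nonneg _
          have hp2 : (0:ℝ) ≤ |1 - Real.cos (((k:ℝ)+1)*π)| := abs_nonneg _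
          have hp3 : (0:ℝ) ≤ |2/(((k:ℝ)+1)*π)| := abs_nonneg _
          have h2π : (0:ℝ) ≤ 2/π := by positivity
          exact mul_le_mul (mul_le_mul h1 h2 hp2 (by norm_num)) h3 hp3 (by positivity)
      _ = (2/π) * 2 * Real.exp (E k) := by ring
  -- split into even and odd
  have hsum_even : Summable (fun j => I (2 * j)) :=
    hsumI.comp_injective (mul_right_injective₀ two_ne_zero)
  have hsum_odd : Summable (fun j => I (2 * j + 1)) :=
    hsumI.comp_injective fun a b h => by omega
  rw [← tsum_even_add_odd hsum_even hsum_odd]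
  have hodd : ∀ j : ℕ, I (2 * j + 1) = 0 := by
    intro j
    have hs : Real.sin ((((2*j+1:ℕ):ℝ)+1)*π/2) = 0 := by
      have : (((2*j+1:ℕ):ℝ)+1)*π/2 = ((j+1:ℕ):ℝ) * π := by push_cast; ring
      rw [this, Real.sin_nat_mul_pi]
    simp only [hIdef, hs, zero_mul]
  have heven : ∀ j : ℕ, I (2 * j) =
      (4 / π) * (((-1 : ℝ) ^ j / (2 * (j : ℝ) + 1)) *
        Real.exp (-((2 * (j : ℝ) + 1) ^ 2 * π ^ 2 * t) / (8 * R ^ 2))) := by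
    intro j
    have hcos : Real.cos ((((2*j:ℕ):ℝ)+1)*π) = -1 := by
      have : (((2*j:ℕ):ℝ)+1)*π = (j:ℕ) * (2 * π) + π := by push_cast; ring
      rw [this, Real.cos_nat_mul_two_pi_add_pi]
    have hsin : Real.sin ((((2*j:ℕ):ℝ)+1)*π/2) = (-1:ℝ)^j := by
      have h1 : (((2*j:ℕ):ℝ)+1)*π/2 = (j:ℝ) * π + π/2 := by push_cast; ring
      rw [h1, Real.sin_add, Real.sin_pi_div_two, Real.cos_pi_div_two]
      have h2 : Real.cos ((j:ℝ) * π) = (-1:ℝ)^j := by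
        have := Real.cos_nat_mul_pi_sub 0 j
        simpa using this
      rw [h2]
      have h3 : Real.sin ((j:ℝ) * π) = 0 := Real.sin_nat_mul_pi j
      rw [h3]; ring
    have hExp : E (2*j) = -((2 * (j : ℝ) + 1) ^ 2 * π ^ 2 * t) / (8 * R ^ 2) := by
      simp only [hE]
      push_cast
      field_simp
      ring
    simp only [hIdef, hcos, hsin, hExp]
    have h2j : ((2*j:ℕ):ℝ) + 1 = 2*(j:ℝ)+1 := by push_cast; ring
    rw [h2j]
    have hne : (2*(j:ℝ)+1) ≠ 0 := by positivity
    field_simp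
    ring
  rw [tsum_congr hodd, tsum_congr heven, tsum_zero, add_zero, tsum_mul_left]
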